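/- Let G₄ = ⟨x, y, z : [x,y]=1, zxz⁻¹ = y, zyz⁻¹ = x⁻¹⟩ and let Γ = ⟨x, y⟩ ≅ Z². If Δ ≤ G₄ is a subgroup of finite index such that the minimal positive exponent a of z occurring among canonical forms of elements of Δ is odd, then Δ ∩ Γ is a normal subgroup of G₄. -/

import Mathlib

/-- The relations of `G₄ = ⟨x, y, z : xyx⁻¹y⁻¹ = 1, zxz⁻¹ = y, zyz⁻¹ = x⁻¹⟩`,
with `x, y, z` being the generators `0, 1, 2 : Fin 3`. -/
def relsG4 : Set (FreeGroup (Fin 3)) :=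
  { FreeGroup.of 0 * FreeGroup.of 1 * (FreeGroup.of 0)⁻¹ * (FreeGroup.of 1)⁻¹,
    FreeGroup.of 2 * FreeGroup.of 0 * (FreeGroup.of 2)⁻¹ * (FreeGroup.of 1)⁻¹,
    FreeGroup.of 2 * FreeGroup.of 1 * (FreeGroup.of 2)⁻¹ * FreeGroup.of 0 }

/-- The fundamental group `G₄ = π₁(𝒢₄)`. -/
abbrev G4 : Type := PresentedGroup relsG4

/-- The generator `x` of `G₄`. -/
def X : G4 := PresentedGroup.of 0
/-- The generator `y` of `G₄`. -/
def Y : G4 := PresentedGroup.of 1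
/-- The generator `z` of `G₄`. -/
def Z : G4 := PresentedGroup.of 2

open Subgroup

namespace G4Aux

lemma mk_rel {r : FreeGroup (Fin 3)} (h : r ∈ relsG4) : PresentedGroup.mk relsG4 r = 1 :=
  (QuotientGroup.eq_one_iff r).2 (Subgroup.subset_normalClosure h)

lemma comm_XY : X * Y = Y * X := by
  have h := mk_rel (r := FreeGroup.of 0 * FreeGroup.of 1 * (FreeGroup.of 0)⁻¹ * (FreeGroup.of 1)⁻¹)
    (by simp [relsG4])
  have h2 : X * Y * X⁻¹ * Y⁻¹ = 1 := by
    simpa [X, Y, PresentedGroup.of] using h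
  have h3 : X * Y * X⁻¹ = Y := by
    simpa using mul_inv_eq_one.mp h2
  rw [mul_inv_eq_iff_eq_mul] at h3
  exact h3

lemma relZX : Z * X * Z⁻¹ = Y := by
  have h := mk_rel (r := FreeGroup.of 2 * FreeGroup.of 0 * (FreeGroup.of 2)⁻¹ * (FreeGroup.of 1)⁻¹)
    (by simp [relsG4])
  have h2 : Z * X * Z⁻¹ * Y⁻¹ = 1 := by
    simpa [X, Y, Z, PresentedGroup.of] using h
  simpa using mul_inv_eq_one.mp h2

lemma relZY : Z * Y * Z⁻¹ = X⁻¹ := by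
  have h := mk_rel (r := FreeGroup.of 2 * FreeGroup.of 1 * (FreeGroup.of 2)⁻¹ * FreeGroup.of 0)
    (by simp [relsG4])
  have h2 : Z * Y * Z⁻¹ * X = 1 := by
    simpa [X, Y, Z, PresentedGroup.of] using h
  simpa using mul_eq_one_iff_eq_inv.mp h2

/-- `Γ = ⟨X, Y⟩`. -/
noncomputable abbrev Γ : Subgroup G4 := Subgroup.closure {X, Y}

lemma XmemΓ : X ∈ Γ := subset_closure (by simp)
lemma YmemΓ : Y ∈ Γ := subset_closure (by simp)

lemma gamma_comm {u v : G4} (hu : u ∈ Γ) (hv : v ∈ Γ) : Commute u v := by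
  have key : ∀ s, s = X ∨ s = Y → ∀ w ∈ Γ, Commute s w := by
    intro s hs w hw
    induction hw using closure_induction with
    | mem x hx =>
      rcases (by simpa using hx : x = X ∨ x = Y) with rfl | rfl <;> rcases hs with rfl | rfl
      · exact Commute.refl _
      · exact comm_XY.symm
      · exact comm_XY
      · exact Commute.refl _
    | one => exact Commute.one_right _
    | mul x y _ _ hx hy => exact hx.mul_right hy
    | inv x _ hx => exact hx.inv_right
  induction hu using closure_induction with
  | mem x hx => exact key x (by simpa using hx) v hv
  | one => exact Commute.one_left _
  | mul x y _ _ hx hy => exact hx.mul_left hy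
  | inv x _ hx => exact hx.inv_left

lemma gamma_conj_eq {u v : G4} (hu : u ∈ Γ) (hv : v ∈ Γ) : u * v * u⁻¹ = v := by
  rw [(gamma_comm hu hv).eq, mul_assoc, mul_inv_cancel, mul_one]

lemma conjZ_mem {w : G4} (hw : w ∈ Γ) : Z * w * Z⁻¹ ∈ Γ := by
  induction hw using closure_induction with
  | mem x hx =>
    rcases (by simpa using hx : x = X ∨ x = Y) with rfl | rfl
    · rw [relZX]; exact YmemΓ
    · rw [relZY]; exact inv_mem XmemΓ
  | one => simpa using one_mem _
  | mul x y _ _ hx hy =>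
    have h : Z * (x * y) * Z⁻¹ = (Z * x * Z⁻¹) * (Z * y * Z⁻¹) := by group
    rw [h]; exact mul_mem hx hy
  | inv x _ hx =>
    have h : Z * x⁻¹ * Z⁻¹ = (Z * x * Z⁻¹)⁻¹ := by group
    rw [h]; exact inv_mem hx

lemma relZX' : Z⁻¹ * X * Z = Y⁻¹ := by
  have h : Y = Z⁻¹ * X⁻¹ * Z := by rw [← relZY]; group
  rw [h]; group

lemma relZY' : Z⁻¹ * Y * Z = X := by
  rw [← relZX]; group

lemma conjZinv_mem {w : G4} (hw : w ∈ Γ) : Z⁻¹ * w * Z ∈ Γ := by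
  induction hw using closure_induction with
  | mem x hx =>
    rcases (by simpa using hx : x = X ∨ x = Y) with rfl | rfl
    · rw [relZX']; exact inv_mem YmemΓ
    · rw [relZY']; exact XmemΓ
  | one => simpa using one_mem _
  | mul x y _ _ hx hy =>
    have h : Z⁻¹ * (x * y) * Z = (Z⁻¹ * x * Z) * (Z⁻¹ * y * Z) := by group
    rw [h]; exact mul_mem hx hy
  | inv x _ hx =>
    have h : Z⁻¹ * x⁻¹ * Z = (Z⁻¹ * x * Z)⁻¹ := by group
    rw [h]; exact inv_mem hx

lemma conjZpow_mem {w : G4} (hw : w ∈ Γ) (n : ℤ) : Z ^ n * w * (Z ^ n)⁻¹ ∈ Γ := by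
  induction n using Int.induction_on with
  | zero => simpa using hw
  | succ k ih =>
    have h : Z ^ ((k : ℤ) + 1) * w * (Z ^ ((k : ℤ) + 1))⁻¹
        = Z * (Z ^ (k : ℤ) * w * (Z ^ (k : ℤ))⁻¹) * Z⁻¹ := by
      rw [zpow_add_one]; group
    rw [h]; exact conjZ_mem ih
  | pred k ih =>
    have h : Z ^ (-(k : ℤ) - 1) * w * (Z ^ (-(k : ℤ) - 1))⁻¹
        = Z⁻¹ * (Z ^ (-(k : ℤ)) * w * (Z ^ (-(k : ℤ)))⁻¹) * Z := by
      rw [zpow_sub_one]; group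
    rw [h]; exact conjZinv_mem ih

lemma z4_eq : Z ^ (4 : ℤ) = Z * Z * Z * Z := by
  rw [show (4 : ℤ) = ((4 : ℕ) : ℤ) by norm_num, zpow_natCast, pow_succ, pow_succ, pow_succ,
    pow_one]

lemma conj_inv_eq (w : G4) : Z * w⁻¹ * Z⁻¹ = (Z * w * Z⁻¹)⁻¹ := by group

lemma commZ4 {w : G4} (hw : w ∈ Γ) : Commute (Z ^ (4 : ℤ)) w := by
  have h3 : Z * X⁻¹ * Z⁻¹ = Y⁻¹ := by rw [conj_inv_eq, relZX]
  have h4 : Z * Y⁻¹ * Z⁻¹ = X := by rw [conj_inv_eq, relZY, inv_inv]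
  have e4X : Z ^ (4 : ℤ) * X * (Z ^ (4 : ℤ))⁻¹ = X := by
    have h : Z ^ (4 : ℤ) * X * (Z ^ (4 : ℤ))⁻¹
        = Z * (Z * (Z * (Z * X * Z⁻¹) * Z⁻¹) * Z⁻¹) * Z⁻¹ := by rw [z4_eq]; group
    rw [h, relZX, relZY, h3, h4]
  have e4Y : Z ^ (4 : ℤ) * Y * (Z ^ (4 : ℤ))⁻¹ = Y := by
    have h : Z ^ (4 : ℤ) * Y * (Z ^ (4 : ℤ))⁻¹
        = Z * (Z * (Z * (Z * Y * Z⁻¹) * Z⁻¹) * Z⁻¹) * Z⁻¹ := by rw [z4_eq]; group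
    rw [h, relZY, h3, h4, relZX]
  induction hw using closure_induction with
  | mem x hx =>
    rcases (by simpa using hx : x = X ∨ x = Y) with rfl | rfl
    · exact mul_inv_eq_iff_eq_mul.mp e4X
    · exact mul_inv_eq_iff_eq_mul.mp e4Y
  | one => exact Commute.one_right _
  | mul x y _ _ hx hy => exact hx.mul_right hy
  | inv x _ hx => exact hx.inv_right

lemma conj_congr {w : G4} (hw : w ∈ Γ) {s t : ℤ} (h : (4 : ℤ) ∣ s - t) :
    Z ^ s * w * (Z ^ s)⁻¹ = Z ^ t * w * (Z ^ t)⁻¹ := by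
  obtain ⟨k, hk⟩ := h
  have hs : s = t + 4 * k := by omega
  have hc : Commute (Z ^ (4 * k : ℤ)) w := by
    rw [zpow_mul]
    exact (commZ4 hw).zpow_left k
  have h1 : Z ^ s * w * (Z ^ s)⁻¹
      = Z ^ t * (Z ^ (4 * k : ℤ) * w * (Z ^ (4 * k : ℤ))⁻¹) * (Z ^ t)⁻¹ := by
    rw [hs, zpow_add]
    generalize Z ^ t = p
    generalize Z ^ (4 * k : ℤ) = q
    group
  have h2 : Z ^ (4 * k : ℤ) * w * (Z ^ (4 * k : ℤ))⁻¹ = w :=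
    mul_inv_eq_iff_eq_mul.mpr hc.eq
  rw [h1, h2]

end G4Aux

open G4Aux in
/-- Let `Γ = ⟨x, y⟩ ≤ G₄`. If `Δ ≤ G₄` has finite index and the minimal positive exponent
`a` of `z` occurring among the canonical forms `xᵇ¹yᵇ²z^c` of elements of `Δ` is odd,
then `Δ ∩ Γ` is normal in `G₄`. -/
theorem G4_intersection_normal (Δ : Subgroup G4) (hfin : Δ.index ≠ 0) (a : ℤ)
    (ha_pos : 0 < a) (ha_odd : Odd a)
    (ha_mem : ∃ b₁ b₂ : ℤ, X ^ b₁ * Y ^ b₂ * Z ^ a ∈ Δ)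
    (ha_min : ∀ c : ℤ, 0 < c → (∃ b₁ b₂ : ℤ, X ^ b₁ * Y ^ b₂ * Z ^ c ∈ Δ) → a ≤ c) :
    (Δ ⊓ Subgroup.closure {X, Y}).Normal := by
  obtain ⟨b₁, b₂, hg⟩ := ha_mem
  set u : G4 := X ^ b₁ * Y ^ b₂ with hu
  have huΓ : u ∈ Γ := mul_mem (zpow_mem XmemΓ _) (zpow_mem YmemΓ _)
  have stepA : ∀ w ∈ Δ ⊓ Γ, Z ^ a * w * (Z ^ a)⁻¹ ∈ Δ ⊓ Γ := by
    rintro w ⟨hwΔ, hwΓ⟩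
    have hwz : Z ^ a * w * (Z ^ a)⁻¹ ∈ Γ := conjZpow_mem hwΓ a
    have he : (u * Z ^ a) * w * (u * Z ^ a)⁻¹ = u * (Z ^ a * w * (Z ^ a)⁻¹) * u⁻¹ := by
      generalize Z ^ a = q; group
    have he2 : u * (Z ^ a * w * (Z ^ a)⁻¹) * u⁻¹ = Z ^ a * w * (Z ^ a)⁻¹ :=
      gamma_conj_eq huΓ hwz
    refine ⟨?_, hwz⟩
    rw [← he2, ← he]
    exact Δ.mul_mem (Δ.mul_mem hg hwΔ) (Δ.inv_mem hg)
  have stepB : ∀ w ∈ Δ ⊓ Γ, (Z ^ a)⁻¹ * w * Z ^ a ∈ Δ ⊓ Γ := by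
    rintro w ⟨hwΔ, hwΓ⟩
    have hwz : (Z ^ a)⁻¹ * w * Z ^ a ∈ Γ := by
      have h : (Z ^ a)⁻¹ * w * Z ^ a = Z ^ (-a) * w * (Z ^ (-a))⁻¹ := by
        rw [zpow_neg, inv_inv]
      rw [h]; exact conjZpow_mem hwΓ (-a)
    have hc : u⁻¹ * w * u = w := by
      have h := gamma_conj_eq (inv_mem huΓ) hwΓ
      rwa [inv_inv] at h
    have he : (u * Z ^ a)⁻¹ * w * (u * Z ^ a) = (Z ^ a)⁻¹ * (u⁻¹ * w * u) * Z ^ a := by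
      generalize Z ^ a = q; group
    refine ⟨?_, hwz⟩
    have hΔ : (u * Z ^ a)⁻¹ * w * (u * Z ^ a) ∈ Δ :=
      Δ.mul_mem (Δ.mul_mem (Δ.inv_mem hg) hwΔ) hg
    rwa [he, hc] at hΔ
  have hmod : a % 4 = 1 ∨ a % 4 = 3 := by
    obtain ⟨k, hk⟩ := ha_odd; omega
  have hBneg : ∀ w ∈ Δ ⊓ Γ, Z ^ (-a) * w * (Z ^ (-a))⁻¹ ∈ Δ ⊓ Γ := by
    intro w hw
    have h : Z ^ (-a) * w * (Z ^ (-a))⁻¹ = (Z ^ a)⁻¹ * w * Z ^ a := by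
      rw [zpow_neg, inv_inv]
    rw [h]; exact stepB w hw
  have keyZ : ∀ w ∈ Δ ⊓ Γ, Z * w * Z⁻¹ ∈ Δ ⊓ Γ := by
    intro w hw
    have h1 : Z * w * Z⁻¹ = Z ^ (1 : ℤ) * w * (Z ^ (1 : ℤ))⁻¹ := by rw [zpow_one]
    rcases hmod with h | h
    · rw [h1, conj_congr hw.2 (s := 1) (t := a) (by omega)]
      exact stepA w hw
    · rw [h1, conj_congr hw.2 (s := 1) (t := -a) (by omega)]
      exact hBneg w hw
  have keyZinv : ∀ w ∈ Δ ⊓ Γ, Z⁻¹ * w * Z ∈ Δ ⊓ Γ := by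
    intro w hw
    have h1 : Z⁻¹ * w * Z = Z ^ (-1 : ℤ) * w * (Z ^ (-1 : ℤ))⁻¹ := by
      rw [zpow_neg, zpow_one, inv_inv]
    rcases hmod with h | h
    · rw [h1, conj_congr hw.2 (s := -1) (t := -a) (by omega)]
      exact hBneg w hw
    · rw [h1, conj_congr hw.2 (s := -1) (t := a) (by omega)]
      exact stepA w hw
  have hΓnorm : ∀ s, s ∈ Γ → s ∈ Subgroup.normalizer ((Δ ⊓ Γ : Subgroup G4) : Set G4) := by
    intro s hs
    rw [Subgroup.mem_normalizer_iff]
    intro n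
    constructor
    · intro hn
      rw [gamma_conj_eq hs hn.2]
      exact hn
    · intro hn
      have hnΓ : n ∈ Γ := by
        have h : n = s⁻¹ * (s * n * s⁻¹) * s := by group
        rw [h]
        exact mul_mem (mul_mem (inv_mem hs) hn.2) hs
      rwa [gamma_conj_eq hs hnΓ] at hn
  have hZnorm : Z ∈ Subgroup.normalizer ((Δ ⊓ Γ : Subgroup G4) : Set G4) := by
    rw [Subgroup.mem_normalizer_iff]
    intro n
    constructor
    · exact fun hn => keyZ n hn
    · intro hn
      have h : n = Z⁻¹ * (Z * n * Z⁻¹) * Z := by group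
      rw [h]
      exact keyZinv _ hn
  have htop : ∀ g : G4, g ∈ Subgroup.normalizer ((Δ ⊓ Γ : Subgroup G4) : Set G4) := by
    intro g
    refine PresentedGroup.generated_by relsG4 _ ?_ g
    intro j
    fin_cases j
    · exact hΓnorm X XmemΓ
    · exact hΓnorm Y YmemΓ
    · exact hZnorm
  exact ⟨fun n hn g => (Subgroup.mem_normalizer_iff.mp (htop g) n).mp hn⟩
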